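/- arXiv:1402.1654 — 2 statements merged into one kernel-verified Lean document; each statement's English description precedes it below -/
import Mathlib

section
/- Let Ω > 0 be irrational and ω = (1, Ω). Define γ_k = |⟨k, ω⟩| · |k|_1 for k ∈ ℤ² \ {0}, γ* = liminf_{|k|→∞} γ_k, and ν* = liminf_{q→∞} q·‖qΩ‖. Then ν* = γ*/(1 + Ω). -/
open Filter Matrix

/-- The Gauss map. -/
noncomputable def gaussMap (x : ℝ) : ℝ := Int.fract (1 / x)

/-- `cfa Ω n` is the `(n+1)`-st partial quotient `a_{n+1}` of the continued fraction of `Ω`. -/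
noncomputable def cfa (Ω : ℝ) (n : ℕ) : ℤ := ⌊1 / (gaussMap^[n] (Int.fract Ω))⌋

/-- `cfq Ω (n+1)` is the convergent denominator `q_n`; `cfq Ω 0 = q_{-1} = 0`. -/
noncomputable def cfq (Ω : ℝ) : ℕ → ℤ
  | 0 => 0
  | 1 => 1
  | n + 2 => cfa Ω n * cfq Ω (n + 1) + cfq Ω n

/-- `cfp Ω (n+1)` is the convergent numerator `p_n` of `Int.fract Ω`; `cfp Ω 0 = p_{-1} = 1`. -/
noncomputable def cfp (Ω : ℝ) : ℕ → ℤ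
  | 0 => 1
  | 1 => 0
  | n + 2 => cfa Ω n * cfp Ω (n + 1) + cfp Ω n

/-- `cfnum Ω (n+1)` is the numerator `p_n` of the `n`-th convergent of `Ω` itself. -/
noncomputable def cfnum (Ω : ℝ) (n : ℕ) : ℤ := cfp Ω n + cfq Ω n * ⌊Ω⌋

/-- Distance from `x` to the nearest integer. -/
noncomputable def nearestDist (x : ℝ) : ℝ := |x - round x|

/-- `nu Ω q = q · ‖qΩ‖`. -/
noncomputable def nu (Ω q : ℝ) : ℝ := q * nearestDist (q * Ω)

/-- Value of the finite continued fraction `[b_1, ..., b_k] = 1/(b_1 + 1/(b_2 + ⋯ + 1/b_k))`. -/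
noncomputable def finCF : List ℤ → ℝ
  | [] => 0
  | b :: l => 1 / ((b : ℝ) + finCF l)



lemma my_le_add_eps {a b : ℝ} (h : ∀ ε : ℝ, 0 < ε → a ≤ b + ε) : a ≤ b := by
  by_contra hc
  push_neg at hc
  have := h ((a - b) / 2) (by linarith)
  linarith

lemma nearestDist_nonneg (x : ℝ) : 0 ≤ nearestDist x := abs_nonneg _

lemma nearestDist_le (x : ℝ) (m : ℤ) : nearestDist x ≤ |x - m| := by
  rcases eq_or_ne m (round x) with rfl | h
  · exact le_of_eq rfl
  · have h1 : |x - round x| ≤ 1 / 2 := abs_sub_round x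
    have h2 : (1 : ℝ) ≤ |(round x : ℝ) - m| := by
      have hne : round x - m ≠ 0 := sub_ne_zero.mpr (Ne.symm h)
      have := Int.one_le_abs hne
      calc (1:ℝ) = ((1:ℤ):ℝ) := by norm_num
        _ ≤ ((|round x - m| : ℤ) : ℝ) := by exact_mod_cast this
        _ = |(round x : ℝ) - m| := by push_cast; ring_nf
    have h3 : |(round x : ℝ) - m| ≤ |(round x : ℝ) - x| + |x - m| := abs_sub_le _ _ _
    have h4 : |(round x : ℝ) - x| = |x - round x| := abs_sub_comm _ _
    show |x - round x| ≤ |x - m|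
    linarith

lemma infinite_image_of_finite_fibers {α β : Type*} {s : Set α} (f : α → β)
    (hs : s.Infinite) (h : ∀ b, {a | a ∈ s ∧ f a = b}.Finite) : (f '' s).Infinite := by
  intro hfin
  apply hs
  have hsub : s ⊆ ⋃ b ∈ f '' s, {a | a ∈ s ∧ f a = b} := by
    intro a ha
    simp only [Set.mem_iUnion, Set.mem_setOf_eq]
    exact ⟨f a, ⟨a, ha, rfl⟩, ha, rfl⟩
  exact (hfin.biUnion fun b _ => h b).subset hsub

lemma dirichlet_freq (Ω : ℝ) (hΩ : Irrational Ω) :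
    {q : ℕ | 0 < q ∧ nu Ω (q : ℝ) < 1}.Infinite := by
  have hS := Real.infinite_rat_abs_sub_lt_one_div_den_sq_of_irrational hΩ
  set S := {r : ℚ | |Ω - r| < 1 / (r.den : ℝ) ^ 2} with hSdef
  have habs : ∀ r ∈ S, |Ω - (r : ℝ)| < 1 := by
    intro r hr
    refine lt_of_lt_of_le hr ?_
    rw [div_le_one (by positivity)]
    have : (1 : ℝ) ≤ (r.den : ℝ) := by exact_mod_cast r.pos
    nlinarith
  have hfib : ∀ d : ℕ, {r | r ∈ S ∧ r.den = d}.Finite := by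
    intro d
    rcases Nat.eq_zero_or_pos d with rfl | hd
    · convert Set.finite_empty
      ext r
      simp only [Set.mem_setOf_eq, Set.mem_empty_iff_false, iff_false, not_and]
      exact fun _ => r.den_nz
    · apply Set.Finite.of_finite_image (f := Rat.num)
      · apply Set.Finite.subset (Set.finite_Icc (-(⌈(|Ω| + 1) * (d : ℝ)⌉)) ⌈(|Ω| + 1) * (d : ℝ)⌉)
        rintro n ⟨r, ⟨hr, hden⟩, rfl⟩
        have h1 : |Ω - (r : ℝ)| < 1 := habs r hr
        have h2 : |(r : ℝ)| ≤ |Ω| + 1 := by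
          have := abs_sub_abs_le_abs_sub (r : ℝ) Ω
          have h4 : |(r:ℝ) - Ω| = |Ω - (r:ℝ)| := abs_sub_comm _ _
          linarith
        have h3 : |(r.num : ℝ)| = |(r : ℝ)| * d := by
          rw [Rat.cast_def, abs_div, hden, Nat.abs_cast]
          field_simp
        have h5 : |(r.num : ℝ)| ≤ (|Ω| + 1) * d := by
          rw [h3]
          apply mul_le_mul_of_nonneg_right h2 (by positivity)
        have h6 : (|r.num| : ℝ) ≤ ((⌈(|Ω| + 1) * (d : ℝ)⌉ : ℤ) : ℝ) := by
          calc (|r.num| : ℝ) = |(r.num : ℝ)| := by push_cast; ring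
            _ ≤ (|Ω| + 1) * d := h5
            _ ≤ _ := Int.le_ceil _
        have h7 : |r.num| ≤ ⌈(|Ω| + 1) * (d : ℝ)⌉ := by exact_mod_cast h6
        exact Set.mem_Icc.mpr (abs_le.mp h7)
      · rintro r₁ ⟨_, hd1⟩ r₂ ⟨_, hd2⟩ hnum
        exact Rat.ext hnum (hd1.trans hd2.symm)
  have himg := infinite_image_of_finite_fibers Rat.den hS hfib
  apply himg.mono
  rintro d ⟨r, hr, rfl⟩
  refine ⟨r.pos, ?_⟩
  have hd : (0 : ℝ) < (r.den : ℝ) := by exact_mod_cast r.pos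
  have key : nearestDist ((r.den : ℝ) * Ω) ≤ |(r.den : ℝ) * Ω - r.num| := nearestDist_le _ _
  have heq : |(r.den : ℝ) * Ω - r.num| = (r.den : ℝ) * |Ω - (r : ℝ)| := by
    rw [Rat.cast_def]
    rw [← abs_of_pos hd, ← abs_mul, abs_of_pos hd]
    congr 1
    rw [mul_sub, mul_div_assoc', mul_div_cancel_left₀ _ hd.ne']
  have hlt : (r.den : ℝ) * |Ω - (r : ℝ)| < 1 / (r.den : ℝ) := by
    have := hr
    rw [hSdef, Set.mem_setOf_eq] at this
    calc (r.den : ℝ) * |Ω - (r : ℝ)| < (r.den : ℝ) * (1 / (r.den : ℝ) ^ 2) := by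
          exact mul_lt_mul_of_pos_left this hd
      _ = 1 / (r.den : ℝ) := by field_simp
  show (r.den : ℝ) * nearestDist ((r.den : ℝ) * Ω) < 1
  calc (r.den : ℝ) * nearestDist ((r.den : ℝ) * Ω) ≤ (r.den : ℝ) * |(r.den : ℝ) * Ω - r.num| :=
        mul_le_mul_of_nonneg_left key hd.le
    _ = (r.den : ℝ) * ((r.den : ℝ) * |Ω - (r : ℝ)|) := by rw [heq]
    _ < (r.den : ℝ) * (1 / (r.den : ℝ)) := mul_lt_mul_of_pos_left hlt hd
    _ = 1 := by field_simp


set_option maxHeartbeats 1000000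

/-- With `γ_k = |⟨k,ω⟩|·|k|₁`, `γ* = liminf_{|k|→∞} γ_k` and
`ν* = liminf_{q→∞} q·‖qΩ‖`, one has `ν* = γ*/(1 + Ω)`. -/
theorem stmt_8 (Ω : ℝ) (hΩ : Irrational Ω) (hpos : 0 < Ω) :
    Filter.liminf (fun q : ℕ => nu Ω (q : ℝ)) Filter.atTop
      = Filter.liminf
          (fun k : ℤ × ℤ => |(k.1 : ℝ) + (k.2 : ℝ) * Ω| * (|(k.1 : ℝ)| + |(k.2 : ℝ)|))
          Filter.cofinite / (1 + Ω) := by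
  have hω : (0 : ℝ) < 1 + Ω := by linarith
  set γ : ℤ × ℤ → ℝ :=
    fun k : ℤ × ℤ => |(k.1 : ℝ) + (k.2 : ℝ) * Ω| * (|(k.1 : ℝ)| + |(k.2 : ℝ)|) with hγdef
  set ν : ℕ → ℝ := fun q : ℕ => nu Ω (q : ℝ) with hνdef
  set N := Filter.liminf ν Filter.atTop with hNdef
  set L := Filter.liminf γ Filter.cofinite with hLdef
  have hν0 : ∀ q : ℕ, 0 ≤ ν q := fun q => mul_nonneg (Nat.cast_nonneg q) (nearestDist_nonneg _)
  have hγ0 : ∀ k, 0 ≤ γ k := fun k => mul_nonneg (abs_nonneg _) (by positivity)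
  have Bν : IsBoundedUnder (· ≥ ·) Filter.atTop ν := isBoundedUnder_of ⟨0, fun q => hν0 q⟩
  have Bγ : IsBoundedUnder (· ≥ ·) Filter.cofinite γ := isBoundedUnder_of ⟨0, fun k => hγ0 k⟩
  have hDir : {q : ℕ | 0 < q ∧ ν q < 1}.Infinite := dirichlet_freq Ω hΩ
  have FD : ∃ᶠ q : ℕ in Filter.atTop, 0 < q ∧ ν q < 1 :=
    Nat.frequently_atTop_iff_infinite.mpr hDir
  have Cν : IsCoboundedUnder (· ≥ ·) Filter.atTop ν :=
    IsCoboundedUnder.of_frequently_le (a := 1) (FD.mono fun q h => h.2.le)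
  have hN0 : 0 ≤ N := le_liminf_of_le Cν (Filter.Eventually.of_forall hν0)
  have hN1 : N ≤ 1 := liminf_le_of_frequently_le (FD.mono fun q h => h.2.le) Bν
  -- key computation for the embedding q ↦ (-round(qΩ), q)
  have keyγ : ∀ q : ℕ, γ (-(round ((q : ℝ) * Ω)), (q : ℤ))
      ≤ ν q * (1 + Ω) + nearestDist ((q : ℝ) * Ω) / 2 := by
    intro q
    have hx0 : (0 : ℝ) ≤ (q : ℝ) * Ω := by positivity
    have hnd : |((-(round ((q : ℝ) * Ω)) : ℤ) : ℝ) + ((q : ℤ) : ℝ) * Ω|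
        = nearestDist ((q : ℝ) * Ω) := by
      have heq : ((-(round ((q : ℝ) * Ω)) : ℤ) : ℝ) + ((q : ℤ) : ℝ) * Ω
          = (q : ℝ) * Ω - round ((q : ℝ) * Ω) := by push_cast; ring
      rw [heq]; rfl
    have h1 : |((-(round ((q : ℝ) * Ω)) : ℤ) : ℝ)| ≤ (q : ℝ) * Ω + 1 / 2 := by
      have h2 : |(q : ℝ) * Ω - round ((q : ℝ) * Ω)| ≤ 1 / 2 := abs_sub_round _
      have h3 : |((round ((q : ℝ) * Ω) : ℤ) : ℝ)|
          ≤ |(q : ℝ) * Ω| + |(q : ℝ) * Ω - round ((q : ℝ) * Ω)| := by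
        have := abs_sub_le ((round ((q : ℝ) * Ω) : ℝ)) ((q : ℝ) * Ω) 0
        simp only [sub_zero] at this
        calc |((round ((q : ℝ) * Ω) : ℤ) : ℝ)|
            ≤ |(round ((q : ℝ) * Ω) : ℝ) - (q : ℝ) * Ω| + |(q : ℝ) * Ω| := this
          _ = |(q : ℝ) * Ω| + |(q : ℝ) * Ω - round ((q : ℝ) * Ω)| := by
              rw [abs_sub_comm]; ring
      push_cast
      rw [abs_neg]
      rw [abs_of_nonneg hx0] at h3
      push_cast at h3
      linarith
    show |((-(round ((q : ℝ) * Ω)) : ℤ) : ℝ) + ((q : ℤ) : ℝ) * Ω|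
        * (|((-(round ((q : ℝ) * Ω)) : ℤ) : ℝ)| + |((q : ℤ) : ℝ)|) ≤ _
    rw [hnd]
    have hqabs : |((q : ℤ) : ℝ)| = (q : ℝ) := by
      rw [abs_of_nonneg]; · push_cast; ring
      · push_cast; positivity
    rw [hqabs]
    have hnd0 := nearestDist_nonneg ((q : ℝ) * Ω)
    calc nearestDist ((q : ℝ) * Ω) * (|((-(round ((q : ℝ) * Ω)) : ℤ) : ℝ)| + (q : ℝ))
        ≤ nearestDist ((q : ℝ) * Ω) * ((q : ℝ) * Ω + 1 / 2 + (q : ℝ)) :=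
          mul_le_mul_of_nonneg_left (by linarith) hnd0
      _ = ν q * (1 + Ω) + nearestDist ((q : ℝ) * Ω) / 2 := by
          show _ = (q : ℝ) * nearestDist ((q : ℝ) * Ω) * (1 + Ω) + _
          ring
  have hinj : ∀ s : Set ℕ, Set.InjOn (fun q : ℕ => ((-(round ((q : ℝ) * Ω)), (q : ℤ)) : ℤ × ℤ)) s := by
    intro s a _ b _ h
    have := congrArg Prod.snd h
    simpa using this
  have FG : ∃ᶠ k : ℤ × ℤ in Filter.cofinite, γ k ≤ 2 + Ω := by
    rw [Filter.frequently_cofinite_iff_infinite]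
    apply Set.Infinite.mono ?_ (Set.Infinite.image (hinj _) hDir)
    rintro k ⟨q, ⟨_, hνq⟩, rfl⟩
    have h := keyγ q
    have hnd2 : nearestDist ((q : ℝ) * Ω) ≤ 1 / 2 := abs_sub_round _
    have := hν0 q
    simp only [Set.mem_setOf_eq]
    nlinarith
  have Cγ : IsCoboundedUnder (· ≥ ·) Filter.cofinite γ :=
    IsCoboundedUnder.of_frequently_le FG
  have hL0 : 0 ≤ L := le_liminf_of_le Cγ (Filter.Eventually.of_forall hγ0)
  have hLB : L ≤ 2 + Ω := liminf_le_of_frequently_le FG Bγ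
  have h1 : L ≤ N * (1 + Ω) := by
    apply my_le_add_eps
    intro ε hε
    set δ : ℝ := min 1 (ε / (2 * (1 + Ω))) with hδdef
    have hδpos : 0 < δ := lt_min one_pos (by positivity)
    have hδ1 : δ ≤ 1 := min_le_left _ _
    have hδ2 : δ * (1 + Ω) ≤ ε / 2 := by
      have h := min_le_right 1 (ε / (2 * (1 + Ω)))
      calc δ * (1 + Ω) ≤ ε / (2 * (1 + Ω)) * (1 + Ω) := mul_le_mul_of_nonneg_right h hω.le
        _ = ε / 2 := by field_simp
    set q₀ : ℕ := max 1 ⌈4 / ε⌉₊ with hq₀def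
    have hq₀ : 4 / ε ≤ (q₀ : ℝ) := by
      calc 4 / ε ≤ (⌈4 / ε⌉₊ : ℝ) := Nat.le_ceil _
        _ ≤ (q₀ : ℝ) := by exact_mod_cast Nat.le_max_right _ _
    have FQ : ∃ᶠ q : ℕ in Filter.atTop, ν q < N + δ :=
      frequently_lt_of_liminf_lt Cν (by linarith)
    have FQ2 : ∃ᶠ q : ℕ in Filter.atTop, ν q < N + δ ∧ q₀ ≤ q :=
      FQ.and_eventually (Filter.eventually_ge_atTop q₀)
    have hset : {q : ℕ | ν q < N + δ ∧ q₀ ≤ q}.Infinite :=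
      Nat.frequently_atTop_iff_infinite.mp FQ2
    have key : ∀ q : ℕ, ν q < N + δ → q₀ ≤ q →
        γ (-(round ((q : ℝ) * Ω)), (q : ℤ)) ≤ N * (1 + Ω) + ε := by
      intro q hν hq
      have hq1 : (1 : ℕ) ≤ q := le_trans (Nat.le_max_left _ _) hq
      have hqR : (1 : ℝ) ≤ (q : ℝ) := by exact_mod_cast hq1
      have hqq₀ : (q₀ : ℝ) ≤ (q : ℝ) := by exact_mod_cast hq
      have hqpos : (0 : ℝ) < (q : ℝ) := by linarith
      have hnd : nearestDist ((q : ℝ) * Ω) * (q : ℝ) ≤ 2 := by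
        have hνeq : (q : ℝ) * nearestDist ((q : ℝ) * Ω) = ν q := rfl
        nlinarith [nearestDist_nonneg ((q : ℝ) * Ω)]
      have hq4 : 4 / ε ≤ (q : ℝ) := le_trans hq₀ hqq₀
      have hndε : nearestDist ((q : ℝ) * Ω) / 2 ≤ ε / 4 := by
        rw [div_le_iff₀ hε] at hq4
        have hnn := nearestDist_nonneg ((q : ℝ) * Ω)
        nlinarith [mul_le_mul_of_nonneg_left hq4 hnn]
      have h := keyγ q
      have : ν q * (1 + Ω) ≤ (N + δ) * (1 + Ω) := mul_le_mul_of_nonneg_right hν.le hω.le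
      nlinarith
    have FG2 : ∃ᶠ k : ℤ × ℤ in Filter.cofinite, γ k ≤ N * (1 + Ω) + ε := by
      rw [Filter.frequently_cofinite_iff_infinite]
      apply Set.Infinite.mono ?_ (Set.Infinite.image (hinj _) hset)
      rintro k ⟨q, ⟨hν, hq⟩, rfl⟩
      exact key q hν hq
    exact liminf_le_of_frequently_le FG2 Bγ
  have habs1 : ∀ n : ℤ, n ≠ 0 → (1 : ℝ) ≤ |(n : ℝ)| := by
    intro n hn
    exact_mod_cast Int.one_le_abs hn
  have habsNat : ∀ n : ℤ, |(n : ℝ)| = ((n.natAbs : ℕ) : ℝ) := by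
    intro n
    rw [Nat.cast_natAbs, Int.cast_abs]
  have h2 : N ≤ L / (1 + Ω) := by
    apply my_le_add_eps
    intro ε hε
    obtain ⟨δ, hδdef⟩ : ∃ x : ℝ, x = min 1 (ε / 2) := ⟨_, rfl⟩
    have hδpos : 0 < δ := by rw [hδdef]; exact lt_min one_pos (by positivity)
    have hδ1 : δ ≤ 1 := by rw [hδdef]; exact min_le_left _ _
    have hδ2 : δ ≤ ε / 2 := by rw [hδdef]; exact min_le_right _ _
    obtain ⟨c, hcdef⟩ : ∃ x : ℝ, x = L + δ := ⟨_, rfl⟩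
    have hc0 : 0 < c := by rw [hcdef]; linarith
    have hcB : c ≤ 3 + Ω := by rw [hcdef]; linarith
    have Fγ : ∃ᶠ k : ℤ × ℤ in Filter.cofinite, γ k < c :=
      frequently_lt_of_liminf_lt Cγ (by rw [hcdef]; linarith)
    have Sinf : {k : ℤ × ℤ | γ k < c}.Infinite :=
      Filter.frequently_cofinite_iff_infinite.mp Fγ
    have hone : ∀ k : ℤ × ℤ, k ≠ 0 → (1 : ℝ) ≤ |(k.1 : ℝ)| + |(k.2 : ℝ)| := by
      intro k hk
      by_cases h1 : k.1 = 0
      · have h2 : k.2 ≠ 0 := fun h => hk (Prod.ext h1 h)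
        have := habs1 k.2 h2
        have := abs_nonneg ((k.1 : ℝ))
        linarith
      · have := habs1 k.1 h1
        have := abs_nonneg ((k.2 : ℝ))
        linarith
    have hsmall : ∀ k : ℤ × ℤ, γ k < c → k ≠ 0 → |(k.1 : ℝ) + (k.2 : ℝ) * Ω| < c := by
      intro k h hk
      have h' : |(k.1 : ℝ) + (k.2 : ℝ) * Ω| * (|(k.1 : ℝ)| + |(k.2 : ℝ)|) < c := h
      have h1 := hone k hk
      have h0 := abs_nonneg ((k.1 : ℝ) + (k.2 : ℝ) * Ω)
      nlinarith
    have hfib : ∀ d : ℕ, {k : ℤ × ℤ | k ∈ {k : ℤ × ℤ | γ k < c} ∧ k.2.natAbs = d}.Finite := by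
      intro d
      apply Set.Finite.subset
        ((Set.finite_Icc (-(⌈c + (d : ℝ) * Ω⌉ + 1)) (⌈c + (d : ℝ) * Ω⌉ + 1)).prod
        ((Set.finite_singleton ((d : ℤ))).insert (-(d : ℤ))))
      rintro k ⟨hγk, hd⟩
      simp only [Set.mem_setOf_eq] at hγk
      have hb : |(k.1 : ℝ)| ≤ c + (d : ℝ) * Ω := by
        by_cases hk : k = 0
        · rw [hk]
          simp only [Prod.fst_zero, Int.cast_zero, abs_zero]
          positivity
        · have hs := hsmall k hγk hk
          have habs2 : |(k.2 : ℝ)| = (d : ℝ) := by rw [habsNat, hd]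
          have htr : |(k.1 : ℝ)| ≤ |(k.1 : ℝ) + (k.2 : ℝ) * Ω| + |(k.2 : ℝ) * Ω| := by
            calc |(k.1 : ℝ)| = |((k.1 : ℝ) + (k.2 : ℝ) * Ω) + (-((k.2 : ℝ) * Ω))| := by
                  congr 1; ring
              _ ≤ |(k.1 : ℝ) + (k.2 : ℝ) * Ω| + |(-((k.2 : ℝ) * Ω))| := abs_add_le _ _
              _ = |(k.1 : ℝ) + (k.2 : ℝ) * Ω| + |(k.2 : ℝ) * Ω| := by rw [abs_neg]
          have hm : |(k.2 : ℝ) * Ω| = (d : ℝ) * Ω := by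
            rw [abs_mul, habs2, abs_of_pos hpos]
          linarith
      constructor
      · have h6 : ((|k.1| : ℤ) : ℝ) ≤ ((⌈c + (d : ℝ) * Ω⌉ + 1 : ℤ) : ℝ) := by
          have hceil := Int.le_ceil (c + (d : ℝ) * Ω)
          have hcast : ((|k.1| : ℤ) : ℝ) = |(k.1 : ℝ)| := by push_cast; ring
          rw [hcast]
          push_cast
          linarith
        have h7 : |k.1| ≤ ⌈c + (d : ℝ) * Ω⌉ + 1 := by exact_mod_cast h6
        exact Set.mem_Icc.mpr (abs_le.mp h7)
      · rcases Int.natAbs_eq k.2 with h | h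
        · right
          simp only [Set.mem_singleton_iff]
          rw [h, hd]
        · left
          rw [h, hd]
    have Timg := infinite_image_of_finite_fibers (fun k : ℤ × ℤ => k.2.natAbs) Sinf hfib
    have FT : ∃ᶠ q : ℕ in Filter.atTop,
        q ∈ (fun k : ℤ × ℤ => k.2.natAbs) '' {k : ℤ × ℤ | γ k < c} :=
      Nat.frequently_atTop_iff_infinite.mpr Timg
    obtain ⟨Q₀, hQdef⟩ : ∃ n : ℕ, n = max 1 ⌈c + 2 * (3 + Ω) ^ 2 / ε⌉₊ := ⟨_, rfl⟩
    have hQ1 : 1 ≤ Q₀ := by rw [hQdef]; exact Nat.le_max_left _ _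
    have hQ₀ : c + 2 * (3 + Ω) ^ 2 / ε ≤ (Q₀ : ℝ) := by
      rw [hQdef]
      calc c + 2 * (3 + Ω) ^ 2 / ε ≤ (⌈c + 2 * (3 + Ω) ^ 2 / ε⌉₊ : ℝ) := Nat.le_ceil _
        _ ≤ _ := by exact_mod_cast Nat.le_max_right _ _
    have Fν : ∃ᶠ q : ℕ in Filter.atTop, ν q ≤ L / (1 + Ω) + ε := by
      apply (FT.and_eventually (Filter.eventually_ge_atTop Q₀)).mono
      rintro q ⟨⟨k, hγk, hqraw⟩, hQ⟩
      simp only [Set.mem_setOf_eq] at hγk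
      have hq : k.2.natAbs = q := hqraw
      have hq1 : 1 ≤ q := le_trans hQ1 hQ
      have hqR : (1 : ℝ) ≤ (q : ℝ) := by exact_mod_cast hq1
      have hqpos : (0 : ℝ) < (q : ℝ) := by linarith
      have hQR : (Q₀ : ℝ) ≤ (q : ℝ) := by exact_mod_cast hQ
      have hk2ne : k.2 ≠ 0 := by
        intro h
        rw [h] at hq
        simp at hq
        omega
      have hkne : k ≠ 0 := fun h => hk2ne (by rw [h]; rfl)
      have habs2 : |(k.2 : ℝ)| = (q : ℝ) := by rw [habsNat, hq]
      have hγk'' : |(k.1 : ℝ) + (k.2 : ℝ) * Ω| * (|(k.1 : ℝ)| + (q : ℝ)) < c := by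
        rw [← habs2]; exact hγk
      have ha0 : 0 ≤ |(k.1 : ℝ) + (k.2 : ℝ) * Ω| := abs_nonneg _
      have hb0 : 0 ≤ |(k.1 : ℝ)| := abs_nonneg _
      have ha_lt : |(k.1 : ℝ) + (k.2 : ℝ) * Ω| < c := hsmall k hγk hkne
      have hbge : (q : ℝ) * Ω - c ≤ |(k.1 : ℝ)| := by
        have htr : |(k.2 : ℝ) * Ω| ≤ |(k.1 : ℝ) + (k.2 : ℝ) * Ω| + |(k.1 : ℝ)| := by
          calc |(k.2 : ℝ) * Ω| = |((k.1 : ℝ) + (k.2 : ℝ) * Ω) + (-(k.1 : ℝ))| := by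
                congr 1; ring
            _ ≤ |(k.1 : ℝ) + (k.2 : ℝ) * Ω| + |(-(k.1 : ℝ))| := abs_add_le _ _
            _ = |(k.1 : ℝ) + (k.2 : ℝ) * Ω| + |(k.1 : ℝ)| := by rw [abs_neg]
        have hm : |(k.2 : ℝ) * Ω| = (q : ℝ) * Ω := by
          rw [abs_mul, habs2, abs_of_pos hpos]
        linarith
      have hnd : nearestDist ((q : ℝ) * Ω) ≤ |(k.1 : ℝ) + (k.2 : ℝ) * Ω| := by
        rcases Int.natAbs_eq k.2 with h | h
        · have hk2 : (k.2 : ℝ) = (q : ℝ) := by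
            rw [h, hq]; push_cast; ring
          calc nearestDist ((q : ℝ) * Ω) ≤ |(q : ℝ) * Ω - ((-k.1 : ℤ) : ℝ)| :=
                nearestDist_le _ _
            _ = |(k.1 : ℝ) + (k.2 : ℝ) * Ω| := by rw [hk2]; congr 1; push_cast; ring
        · have hk2 : (k.2 : ℝ) = -(q : ℝ) := by
            rw [h, hq]; push_cast; ring
          calc nearestDist ((q : ℝ) * Ω) ≤ |(q : ℝ) * Ω - ((k.1 : ℤ) : ℝ)| :=
                nearestDist_le _ _
            _ = |(k.1 : ℝ) + (k.2 : ℝ) * Ω| := by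
                rw [hk2, ← abs_neg]; congr 1; push_cast; ring
      have hνle : ν q ≤ (q : ℝ) * |(k.1 : ℝ) + (k.2 : ℝ) * Ω| := by
        have hνeq : ν q = (q : ℝ) * nearestDist ((q : ℝ) * Ω) := rfl
        rw [hνeq]
        exact mul_le_mul_of_nonneg_left hnd hqpos.le
      have hXpos : 0 < 2 * (3 + Ω) ^ 2 / ε := by positivity
      have hq1Ω : (q : ℝ) ≤ (q : ℝ) * (1 + Ω) := by
        linarith [mul_nonneg hqpos.le hpos.le]
      have hD : 0 < (q : ℝ) * (1 + Ω) - c := by linarith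
      have hexp : (q : ℝ) * (1 + Ω) = (q : ℝ) + (q : ℝ) * Ω := by ring
      have hD2 : (q : ℝ) * (1 + Ω) - c ≤ |(k.1 : ℝ)| + (q : ℝ) := by linarith
      have hbq : (0 : ℝ) < |(k.1 : ℝ)| + (q : ℝ) := lt_of_lt_of_le hD hD2
      have ha2 : |(k.1 : ℝ) + (k.2 : ℝ) * Ω| ≤ c / (|(k.1 : ℝ)| + (q : ℝ)) := by
        rw [le_div_iff₀ hbq]
        exact hγk''.le
      have hν2 : ν q ≤ (q : ℝ) * c / ((q : ℝ) * (1 + Ω) - c) := by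
        calc ν q ≤ (q : ℝ) * |(k.1 : ℝ) + (k.2 : ℝ) * Ω| := hνle
          _ ≤ (q : ℝ) * (c / (|(k.1 : ℝ)| + (q : ℝ))) :=
              mul_le_mul_of_nonneg_left ha2 hqpos.le
          _ = (q : ℝ) * c / (|(k.1 : ℝ)| + (q : ℝ)) := by ring
          _ ≤ (q : ℝ) * c / ((q : ℝ) * (1 + Ω) - c) :=
              div_le_div_of_nonneg_left (by positivity) hD hD2
      have hfinal : (q : ℝ) * c / ((q : ℝ) * (1 + Ω) - c) ≤ c / (1 + Ω) + ε / 2 := by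
        rw [div_le_iff₀ hD]
        have ht : c / (1 + Ω) * (1 + Ω) = c := div_mul_cancel₀ _ hω.ne'
        have hDge : 2 * (3 + Ω) ^ 2 / ε ≤ (q : ℝ) * (1 + Ω) - c := by linarith
        have e1 : ε / 2 * (2 * (3 + Ω) ^ 2 / ε) = (3 + Ω) ^ 2 := by field_simp
        have s1 : c ^ 2 ≤ (3 + Ω) ^ 2 := by nlinarith
        have s2 : (3 + Ω) ^ 2 ≤ ε / 2 * ((q : ℝ) * (1 + Ω) - c) := by
          rw [← e1]
          exact mul_le_mul_of_nonneg_left hDge (by positivity)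
        have s3 : ε / 2 * ((q : ℝ) * (1 + Ω) - c)
            ≤ ε / 2 * ((1 + Ω) * ((q : ℝ) * (1 + Ω) - c)) := by
          nlinarith [hD.le, hε.le, hpos.le, mul_nonneg (mul_nonneg hε.le hD.le) hpos.le]
        have hc2 : c ^ 2 ≤ ε / 2 * ((1 + Ω) * ((q : ℝ) * (1 + Ω) - c)) := by linarith
        have ht2 : c / (1 + Ω) * c * (1 + Ω) = c ^ 2 := by
          field_simp
        have ht3 : c / (1 + Ω) * c ≤ ε / 2 * ((q : ℝ) * (1 + Ω) - c) := by
          have h5 : (c / (1 + Ω) * c) * (1 + Ω)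
              ≤ (ε / 2 * ((q : ℝ) * (1 + Ω) - c)) * (1 + Ω) := by
            calc (c / (1 + Ω) * c) * (1 + Ω) = c ^ 2 := by linarith [ht2]
              _ ≤ ε / 2 * ((1 + Ω) * ((q : ℝ) * (1 + Ω) - c)) := hc2
              _ = (ε / 2 * ((q : ℝ) * (1 + Ω) - c)) * (1 + Ω) := by ring
          exact le_of_mul_le_mul_right h5 hω
        have ht4 : c / (1 + Ω) * (1 + Ω) * (q : ℝ) = c * (q : ℝ) := by rw [ht]
        linarith [ht3, ht4]
      have hlast : c / (1 + Ω) ≤ L / (1 + Ω) + δ := by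
        rw [hcdef, add_div]
        have : δ / (1 + Ω) ≤ δ := div_le_self hδpos.le (by linarith)
        linarith
      linarith [hν2, hfinal, hlast, hδ2]
    exact liminf_le_of_frequently_le Fν Bν
  exact le_antisymm h2 (by rw [div_le_iff₀ hω]; exact h1)
end

section
/- Let Ω = 2·∑_{k=1}^∞ 2^{−2^k}. Then Ω is irrational and is a number of constant type: all partial quotients of its continued fraction expansion are 1 or 2. -/
open Filter Matrix

namespace S19

def Mq (b : ℤ) : Matrix (Fin 2) (Fin 2) ℤ := !![b, 1; 1, 0]

def PL (l : List ℤ) : Matrix (Fin 2) (Fin 2) ℤ := (l.map Mq).prod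

@[simp] lemma PL_nil : PL [] = 1 := rfl

@[simp] lemma PL_cons (b : ℤ) (l : List ℤ) : PL (b :: l) = Mq b * PL l := by
  simp [PL]

lemma PL_append (l₁ l₂ : List ℤ) : PL (l₁ ++ l₂) = PL l₁ * PL l₂ := by
  simp [PL]

lemma Mq_transpose (b : ℤ) : (Mq b)ᵀ = Mq b := by
  ext i j
  fin_cases i <;> fin_cases j <;> simp [Mq]

lemma PL_reverse (l : List ℤ) : PL l.reverse = (PL l)ᵀ := by
  induction l with
  | nil => simp [Matrix.transpose_one]
  | cons b l ih =>
    rw [List.reverse_cons, PL_append, PL_cons, PL_nil, mul_one, ih, PL_cons,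
      Matrix.transpose_mul, Mq_transpose]

lemma PL_det (l : List ℤ) : (PL l).det = (-1) ^ l.length := by
  induction l with
  | nil => simp
  | cons b l ih =>
    rw [PL_cons, Matrix.det_mul, ih]
    simp [Mq, Matrix.det_fin_two_of, List.length_cons, pow_succ]

def V : ℕ → List ℤ
  | 0 => [1, 2, 1, 1, 1, 1]
  | m + 1 => V m ++ [1, 1, 1, 2] ++ (V m).reverse

def W (m : ℕ) : List ℤ := 1 :: 1 :: (V m ++ [1, 1])

lemma V_length (m : ℕ) : (V m).length = 10 * 2 ^ m - 4 := by
  induction m with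
  | zero => rfl
  | succ m ih =>
    have h4 : 4 ≤ 10 * 2 ^ m := by
      have : 1 ≤ 2 ^ m := Nat.one_le_two_pow
      omega
    simp [V, ih, pow_succ]
    omega

lemma W_length (m : ℕ) : (W m).length = 10 * 2 ^ m := by
  have h4 : 4 ≤ 10 * 2 ^ m := by
    have : 1 ≤ 2 ^ m := Nat.one_le_two_pow
    omega
  simp [W, V_length]
  omega

lemma V_mem (m : ℕ) : ∀ x ∈ V m, x = 1 ∨ x = 2 := by
  induction m with
  | zero => decide
  | succ m ih =>
    intro x hx
    simp [V] at hx
    rcases hx with h | h | h | h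
    exacts [ih x h, Or.inl h, Or.inr h, ih x h]

lemma W_mem (m : ℕ) : ∀ x ∈ W m, x = 1 ∨ x = 2 := by
  intro x hx
  simp [W] at hx
  rcases hx with h | h | h
  exacts [Or.inl h, V_mem m x h, Or.inl h]

lemma W_succ (m : ℕ) : W (m + 1) = W m ++ ([1, 2] ++ (V m).reverse ++ [1, 1]) := by
  simp [W, V]

lemma W_prefix (m : ℕ) : W m <+: W (m + 1) := by
  rw [W_succ]; exact List.prefix_append _ _

lemma W_prefix_le {m m' : ℕ} (h : m ≤ m') : W m <+: W m' := by
  induction m' with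
  | zero => rw [Nat.le_zero.mp h]
  | succ k ih =>
    rcases Nat.lt_or_ge m (k+1) with h'|h'
    · exact (ih (Nat.lt_succ_iff.mp h')).trans (W_prefix k)
    · rw [Nat.le_antisymm h h']

lemma n_lt_W_length (n : ℕ) : n < (W n).length := by
  rw [W_length]
  calc n < 2 ^ n := Nat.lt_two_pow_self (n := n)
  _ ≤ 10 * 2 ^ n := by omega

def a (n : ℕ) : ℤ := (W n).getD n 1

lemma a_eq {M n : ℕ} (h : n < (W M).length) : a n = (W M).getD n 1 := by
  rcases le_total n M with h' | h'
  · have hp := W_prefix_le h'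
    have hn := n_lt_W_length n
    rw [a, List.getD_eq_getElem _ _ hn, List.getD_eq_getElem _ _ h,
      hp.getElem hn]
  · have hp := W_prefix_le h'
    rw [a, List.getD_eq_getElem _ _ h,
      List.getD_eq_getElem _ _ (h.trans_le hp.length_le), hp.getElem h]

lemma a_mem (n : ℕ) : a n = 1 ∨ a n = 2 := by
  have hn := n_lt_W_length n
  have : a n ∈ W n := by
    rw [a, List.getD_eq_getElem _ _ hn]
    exact List.getElem_mem _
  exact W_mem n _ this

lemma a_one_le (n : ℕ) : 1 ≤ a n := by rcases a_mem n with h | h <;> omega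

lemma a_le_two (n : ℕ) : a n ≤ 2 := by rcases a_mem n with h | h <;> omega

def qd : ℕ → ℤ
  | 0 => 0
  | 1 => 1
  | n + 2 => a n * qd (n + 1) + qd n

def pd : ℕ → ℤ
  | 0 => 1
  | 1 => 0
  | n + 2 => a n * pd (n + 1) + pd n

/-- Continuant/take lemma. -/
lemma PL_take {l : List ℤ} (hl : ∀ i (h : i < l.length), l[i] = a i) :
    ∀ n, n ≤ l.length → PL (l.take n) = !![qd (n+1), qd n; pd (n+1), pd n] := by
  intro n
  induction n with
  | zero =>
    intro _
    simp [qd, pd, ← Matrix.one_fin_two]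
  | succ n ih =>
    intro hn
    have hn' : n < l.length := hn
    rw [List.take_succ, PL_append, ih hn'.le, List.getElem?_eq_getElem hn']
    simp only [Option.toList_some, PL_cons, PL_nil, mul_one, hl n hn', Mq]
    rw [Matrix.mul_fin_two]
    have hq : qd (n + 1 + 1) = a n * qd (n+1) + qd n := rfl
    have hp : pd (n + 1 + 1) = a n * pd (n+1) + pd n := rfl
    ext i j
    fin_cases i <;> fin_cases j <;> simp [hq, hp] <;> ring

def Q (m : ℕ) : ℤ := PL (W m) 0 0
def P (m : ℕ) : ℤ := PL (W m) 1 0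

lemma PL_W0 : PL (W 0) = !![128, 79; 81, 50] := by
  show PL [1,1,1,2,1,1,1,1,1,1] = _
  norm_num [PL, Mq, Matrix.mul_fin_two, List.map_cons, List.prod_cons,
    ← Matrix.one_fin_two]

lemma V_len_even (m : ℕ) : Even ((V m).length + 2) := by
  rw [V_length]
  have : 1 ≤ 2 ^ m := Nat.one_le_two_pow
  exact ⟨5 * 2 ^ m - 1, by omega⟩

lemma transpose_fin_two (α β γ δ : ℤ) : (!![α, β; γ, δ])ᵀ = !![α, γ; β, δ] := by
  ext i j
  fin_cases i <;> fin_cases j <;> simp [Matrix.transpose_apply]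

lemma PL_W (m : ℕ) : PL (W m) = PL (1 :: 1 :: V m) * PL [(1:ℤ), 1] := by
  have hlist : W m = (1 :: 1 :: V m) ++ [(1:ℤ), 1] := by simp [W]
  rw [hlist, PL_append]

lemma PL_W_succ (m : ℕ) :
    PL (W (m + 1)) = PL (1 :: 1 :: V m) * PL [(1:ℤ),1,1,2] * (PL (1 :: 1 :: V m))ᵀ := by
  have hlist : W (m + 1) = (1 :: 1 :: V m) ++ [(1:ℤ),1,1,2] ++ (1 :: 1 :: V m).reverse := by
    simp [W, V]
  rw [hlist, PL_append, PL_append, PL_reverse]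

lemma fold_step (m : ℕ) : Q (m + 1) = 2 * Q m ^ 2 ∧ P (m + 1) = 2 * Q m * P m + 1 := by
  set A := PL (1 :: 1 :: V m) with hA
  have hdet : A.det = 1 := by
    rw [hA, PL_det]
    have := V_len_even m
    simp only [List.length_cons]
    rw [show (V m).length + 1 + 1 = (V m).length + 2 by ring]
    exact Even.neg_one_pow this
  have hD : PL [(1:ℤ),1,1,2] = !![8, 3; 5, 2] := by
    norm_num [PL, Mq, Matrix.mul_fin_two, List.map_cons, List.prod_cons,
      ← Matrix.one_fin_two]
  have hE : PL [(1:ℤ),1] = !![2, 1; 1, 1] := by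
    norm_num [PL, Mq, Matrix.mul_fin_two, List.map_cons, List.prod_cons,
      ← Matrix.one_fin_two]
  have hAe : A = !![A 0 0, A 0 1; A 1 0, A 1 1] := Matrix.eta_fin_two A
  have hdet' : A 0 0 * A 1 1 - A 0 1 * A 1 0 = 1 := by
    rw [← Matrix.det_fin_two_of, ← hAe, hdet]
  constructor
  · show PL (W (m+1)) 0 0 = 2 * (PL (W m) 0 0) ^ 2
    rw [PL_W_succ, PL_W, hD, hE, ← hA]
    conv_lhs => rw [hAe]
    conv_rhs => rw [hAe]
    rw [transpose_fin_two, Matrix.mul_fin_two, Matrix.mul_fin_two, Matrix.mul_fin_two]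
    norm_num
    ring
  · show PL (W (m+1)) 1 0 = 2 * (PL (W m) 0 0) * (PL (W m) 1 0) + 1
    rw [PL_W_succ, PL_W, hD, hE, ← hA]
    conv_lhs => rw [hAe]
    conv_rhs => rw [hAe]
    rw [transpose_fin_two, Matrix.mul_fin_two, Matrix.mul_fin_two, Matrix.mul_fin_two]
    norm_num
    linear_combination hdet'

lemma Q_val (m : ℕ) : Q m = 2 ^ (2 ^ (m + 3) - 1) := by
  induction m with
  | zero =>
    show PL (W 0) 0 0 = _
    rw [PL_W0]
    norm_num
  | succ m ih =>
    rw [(fold_step m).1, ih, ← pow_mul]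
    have h1 : 1 ≤ 2 ^ (m + 3) := Nat.one_le_two_pow
    rw [show (2:ℤ) * 2 ^ ((2 ^ (m + 3) - 1) * 2) = 2 ^ ((2 ^ (m + 3) - 1) * 2 + 1) from
      (pow_succ' 2 _).symm]
    congr 1
    have h2 : (2:ℕ) ^ (m + 1 + 3) = 2 ^ (m + 3) * 2 := by
      rw [show m + 1 + 3 = (m + 3) + 1 from rfl, pow_succ]
    omega

lemma Q_pos (m : ℕ) : 0 < Q m := by rw [Q_val]; positivity

lemma qd_nonneg_pair : ∀ n, 0 ≤ qd n ∧ 0 ≤ qd (n + 1) := by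
  intro n
  induction n with
  | zero => exact ⟨le_refl 0, zero_le_one⟩
  | succ n ih =>
    refine ⟨ih.2, ?_⟩
    show 0 ≤ a n * qd (n + 1) + qd n
    have := a_one_le n
    nlinarith [ih.1, ih.2]

lemma qd_nonneg (n : ℕ) : 0 ≤ qd n := (qd_nonneg_pair n).1

lemma qd_one_le : ∀ n, 1 ≤ qd (n + 1) := by
  intro n
  induction n with
  | zero => exact le_refl 1
  | succ n ih =>
    show 1 ≤ a n * qd (n + 1) + qd n
    have := a_one_le n
    nlinarith [qd_nonneg n]

lemma qd_le_succ (n : ℕ) : qd n ≤ qd (n + 1) := by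
  cases n with
  | zero => exact zero_le_one
  | succ n =>
    show qd (n+1) ≤ a n * qd (n + 1) + qd n
    have := a_one_le n
    nlinarith [qd_nonneg n, qd_one_le n]

lemma qd_mono : Monotone qd := monotone_nat_of_le_succ qd_le_succ

lemma qd_lt_succ {n : ℕ} (h : 1 ≤ n) : qd (n + 1) < qd (n + 2) := by
  show qd (n+1) < a n * qd (n + 1) + qd n
  have h1 := a_one_le n
  have h2 : 1 ≤ qd n := by
    rcases Nat.exists_eq_add_of_le h with ⟨k, rfl⟩
    rw [Nat.add_comm]
    exact qd_one_le k
  nlinarith [qd_one_le n]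

lemma PL_entries_pos (l : List ℤ) (h : ∀ x ∈ l, 1 ≤ x) :
    1 ≤ PL l 0 0 ∧ 0 ≤ PL l 0 1 ∧ 0 ≤ PL l 1 0 ∧ 0 ≤ PL l 1 1 := by
  induction l with
  | nil =>
    refine ⟨le_refl 1, ?_, ?_, ?_⟩ <;> simp [Matrix.one_apply]
  | cons b l ih =>
    have hb : 1 ≤ b := h b (List.mem_cons_self)
    obtain ⟨h1, h2, h3, h4⟩ := ih (fun x hx => h x (List.mem_cons_of_mem b hx))
    rw [PL_cons]
    have e1 : (Mq b * PL l) 0 0 = b * PL l 0 0 + PL l 1 0 := by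
      rw [Matrix.mul_apply, Fin.sum_univ_two]; simp [Mq]
    have e2 : (Mq b * PL l) 0 1 = b * PL l 0 1 + PL l 1 1 := by
      rw [Matrix.mul_apply, Fin.sum_univ_two]; simp [Mq]
    have e3 : (Mq b * PL l) 1 0 = PL l 0 0 := by
      rw [Matrix.mul_apply, Fin.sum_univ_two]; simp [Mq]
    have e4 : (Mq b * PL l) 1 1 = PL l 0 1 := by
      rw [Matrix.mul_apply, Fin.sum_univ_two]; simp [Mq]
    rw [e1, e2, e3, e4]
    refine ⟨by nlinarith, by nlinarith, by linarith, by linarith⟩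

lemma W_getElem (m : ℕ) : ∀ i (h : i < (W m).length), (W m)[i] = a i := by
  intro i h
  rw [a_eq h, List.getD_eq_getElem _ _ h]

lemma Q_eq_qd (m : ℕ) : Q m = qd ((W m).length + 1) := by
  have := PL_take (W_getElem m) (W m).length (le_refl _)
  rw [List.take_length] at this
  show PL (W m) 0 0 = _
  rw [this]
  norm_num

lemma P_eq_pd (m : ℕ) : P m = pd ((W m).length + 1) := by
  have := PL_take (W_getElem m) (W m).length (le_refl _)
  rw [List.take_length] at this
  show PL (W m) 1 0 = _
  rw [this]
  norm_num

lemma key_identity (m n : ℕ) (hn : n + 1 ≤ (W m).length) :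
    ∃ B : ℤ, 1 ≤ B ∧ qd n * P m - pd n * Q m = (-1) ^ (n + 1) * B := by
  have hnle : n ≤ (W m).length := le_trans (Nat.le_succ n) hn
  have htake := PL_take (W_getElem m) n hnle
  have hsplit : PL (W m) = PL ((W m).take n) * PL ((W m).drop n) := by
    rw [← PL_append, List.take_append_drop]
  set B := PL ((W m).drop n) with hB
  have hBpos : 1 ≤ B 0 0 ∧ 0 ≤ B 0 1 ∧ 0 ≤ B 1 0 ∧ 0 ≤ B 1 1 := by
    apply PL_entries_pos
    intro x hx
    have : x ∈ W m := List.mem_of_mem_drop hx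
    rcases W_mem m x this with h | h <;> omega
  have hQ : Q m = qd (n+1) * B 0 0 + qd n * B 1 0 := by
    show PL (W m) 0 0 = _
    rw [hsplit, htake, Matrix.mul_apply, Fin.sum_univ_two]
    norm_num
  have hP : P m = pd (n+1) * B 0 0 + pd n * B 1 0 := by
    show PL (W m) 1 0 = _
    rw [hsplit, htake, Matrix.mul_apply, Fin.sum_univ_two]
    norm_num
  have hdet : qd (n+1) * pd n - qd n * pd (n+1) = (-1) ^ n := by
    have h1 : (PL ((W m).take n)).det = (-1) ^ n := by
      rw [PL_det, List.length_take, min_eq_left hnle]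
    rw [htake, Matrix.det_fin_two_of] at h1
    linarith [h1]
  refine ⟨B 0 0, hBpos.1, ?_⟩
  rw [hQ, hP]
  have : (-1 : ℤ) ^ (n + 1) = -(-1) ^ n := by rw [pow_succ]; ring
  rw [this, ← hdet]
  ring

noncomputable def g (k : ℕ) : ℝ := (2:ℝ) ^ (-(2 ^ (k + 1) : ℤ))

noncomputable def f (k : ℕ) : ℝ := 2 * g k

noncomputable def OM : ℝ := 2 * ∑' k : ℕ, (2:ℝ) ^ (-(2 ^ (k + 1) : ℤ))

lemma g_eq (k : ℕ) : g k = ((2:ℝ) ^ (2 ^ (k + 1) : ℕ))⁻¹ := by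
  rw [g, show ((2:ℤ) ^ (k+1)) = ((2 ^ (k+1) : ℕ) : ℤ) by push_cast; ring,
    _root_.zpow_neg, zpow_natCast]

lemma g_pos (k : ℕ) : 0 < g k := by rw [g_eq]; positivity

lemma f_pos (k : ℕ) : 0 < f k := by simp only [f]; linarith [g_pos k]

lemma g_le (k : ℕ) : g k ≤ ((2:ℝ) ^ (k + 1))⁻¹ := by
  rw [g_eq]
  apply inv_anti₀ (by positivity)
  exact pow_le_pow_right₀ one_le_two (Nat.lt_two_pow_self (n := k+1)).le |>.trans_eq (by norm_num)

lemma f_le (k : ℕ) : f k ≤ (1/2 : ℝ) ^ k := by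
  have := g_le k
  simp only [f]
  have h2 : ((2:ℝ) ^ (k + 1))⁻¹ = (1/2)^k / 2 := by
    rw [pow_succ]
    field_simp
    rw [← mul_pow]; norm_num
  rw [h2] at this
  linarith

lemma summable_f : Summable f := by
  apply Summable.of_nonneg_of_le (fun k => (f_pos k).le) f_le
  exact summable_geometric_of_lt_one (by norm_num) (by norm_num)

lemma OM_eq : OM = ∑' k, f k := by
  simp only [OM, f]
  exact (tsum_mul_left).symm

noncomputable def sig (m : ℕ) : ℝ := ∑ i ∈ Finset.range m, f i

noncomputable def tailSum (m : ℕ) : ℝ := ∑' k, f (k + m)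

lemma OM_split (m : ℕ) : OM = sig m + tailSum m := by
  rw [OM_eq, sig, tailSum, ← Summable.sum_add_tsum_nat_add m summable_f]

lemma summable_tail (m : ℕ) : Summable (fun k => f (k + m)) :=
  (summable_nat_add_iff m).2 summable_f

lemma tail_pos (m : ℕ) : 0 < tailSum m := by
  have h := Summable.le_tsum (summable_tail m) 0 (fun j _ => (f_pos (j + m)).le)
  calc (0:ℝ) < f (0 + m) := f_pos _
  _ ≤ tailSum m := h

lemma tail_le (m : ℕ) : tailSum m ≤ 4 * g m := by
  have hle : ∀ k : ℕ, f (k + m) ≤ 2 * g m * (1/2)^k := by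
    intro k
    simp only [f, g_eq]
    have hexp : 2 ^ (m + 1) + k ≤ 2 ^ (k + m + 1) := by
      have h1 : 2 ^ (m + 1) * (k + 1) ≤ 2 ^ (m+1) * 2 ^ k := by
        apply Nat.mul_le_mul_left
        exact Nat.lt_two_pow_self (n := k)
      have h2 : (2:ℕ) ^ (k + m + 1) = 2 ^ (m + 1) * 2 ^ k := by
        rw [← pow_add]; ring_nf
      have h3 : 1 ≤ 2 ^ (m+1) := Nat.one_le_two_pow
      nlinarith
    have hh : ((2:ℝ) ^ (2 ^ (k + m + 1) : ℕ))⁻¹ ≤ ((2:ℝ) ^ (2 ^ (m + 1) + k : ℕ))⁻¹ := by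
      apply inv_anti₀ (by positivity)
      exact pow_le_pow_right₀ one_le_two hexp
    calc 2 * ((2:ℝ) ^ (2 ^ (k + m + 1) : ℕ))⁻¹
        ≤ 2 * ((2:ℝ) ^ (2 ^ (m + 1) + k : ℕ))⁻¹ := by linarith
      _ = 2 * ((2:ℝ) ^ (2 ^ (m+1) : ℕ))⁻¹ * (1/2)^k := by
          rw [pow_add]
          field_simp
          rw [← mul_pow]; norm_num
      _ = 2 * ((2:ℝ) ^ (2 ^ (m + 1) : ℕ))⁻¹ * (1/2)^k := rfl
  have hsum : Summable (fun k : ℕ => 2 * g m * (1/2:ℝ)^k) := by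
    apply Summable.mul_left
    exact summable_geometric_of_lt_one (by norm_num) (by norm_num)
  have := Summable.tsum_le_tsum hle (summable_tail m) hsum
  rw [tsum_mul_left, tsum_geometric_two] at this
  calc tailSum m ≤ 2 * g m * 2 := this
  _ = 4 * g m := by ring

lemma Q_real (m : ℕ) : (Q m : ℝ) = 2 ^ (2 ^ (m + 3) - 1 : ℕ) := by
  rw [Q_val]; norm_cast

lemma Q_real_pos (m : ℕ) : (0:ℝ) < (Q m : ℝ) := by exact_mod_cast Q_pos m

lemma key_pow (m : ℕ) : 2 * (Q m : ℝ)^2 * f (m + 3) = 1 := by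
  simp only [f, g_eq, Q_real]
  have h1 : 1 ≤ (2:ℕ) ^ (m + 3) := Nat.one_le_two_pow
  have hX : (2 : ℕ) ^ (m + 3 + 1) = ((2:ℕ) ^ (m + 3) - 1) * 2 + 2 := by
    have h2 : (2:ℕ) ^ (m + 3 + 1) = 2 ^ (m+3) * 2 := pow_succ 2 _
    omega
  have hpow : (2:ℝ) ^ ((2:ℕ) ^ (m + 3 + 1)) =
      ((2:ℝ) ^ ((2:ℕ) ^ (m + 3) - 1)) ^ 2 * 4 := by
    rw [hX, pow_add, pow_mul]
    norm_num
  rw [hpow]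
  have hne : ((2:ℝ) ^ ((2:ℕ) ^ (m + 3) - 1)) ≠ 0 := by positivity
  field_simp
  ring

lemma one_div_Q_sq (m : ℕ) : 4 * g (m + 3) = 1 / (Q m : ℝ)^2 := by
  have h := key_pow m
  simp only [f] at h
  have hq : (Q m : ℝ)^2 ≠ 0 := pow_ne_zero _ (ne_of_gt (Q_real_pos m))
  field_simp
  rw [eq_div_iff hq]; linear_combination h

lemma P_real (m : ℕ) : (P m : ℝ) = (Q m : ℝ) * sig (m + 3) := by
  induction m with
  | zero =>
    have hP : P 0 = 81 := by show PL (W 0) 1 0 = 81; rw [PL_W0]; norm_num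
    have hQ : Q 0 = 128 := by show PL (W 0) 0 0 = 128; rw [PL_W0]; norm_num
    rw [hP, hQ, sig]
    rw [Finset.sum_range_succ, Finset.sum_range_succ, Finset.sum_range_one]
    simp only [f, g_eq]
    norm_num
  | succ m ih =>
    have hQs := (fold_step m).1
    have hPs := (fold_step m).2
    have hsig : sig (m + 1 + 3) = sig (m + 3) + f (m + 3) := by
      rw [sig, sig, show m + 1 + 3 = (m+3) + 1 from rfl, Finset.sum_range_succ]
    have hP' : (P (m+1) : ℝ) = 2 * (Q m) * (P m) + 1 := by
      rw [hPs]; push_cast; ring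
    have hQ' : (Q (m+1) : ℝ) = 2 * (Q m)^2 := by
      rw [hQs]; push_cast; ring
    rw [hP', hQ', hsig, ih]
    linear_combination -key_pow m

lemma OM_sub (m : ℕ) : OM - (P m : ℝ) / (Q m : ℝ) = tailSum (m + 3) := by
  rw [P_real, OM_split (m+3)]
  have := Q_real_pos m
  field_simp
  ring

noncomputable def ee (n : ℕ) : ℝ := (-1)^(n+1) * (qd n * OM - pd n)

lemma ee_zero : ee 0 = 1 := by simp [ee, qd, pd]

lemma ee_one : ee 1 = OM := by simp [ee, qd, pd]

lemma ee_rec (n : ℕ) : ee (n+2) = ee n - a n * ee (n+1) := by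
  simp only [ee, show qd (n+2) = a n * qd (n+1) + qd n from rfl,
    show pd (n+2) = a n * pd (n+1) + pd n from rfl]
  push_cast
  rw [pow_succ, pow_succ]
  ring

lemma ee_pos (n : ℕ) : 0 < ee n := by
  have h2n : n + 1 ≤ 2 ^ n := Nat.lt_two_pow_self (n := n)
  have hn : n + 1 ≤ (W n).length := by
    rw [W_length]
    calc n + 1 ≤ 2 ^ n := h2n
    _ ≤ 10 * 2 ^ n := Nat.le_mul_of_pos_left _ (by norm_num)
  obtain ⟨B, hB1, hBe⟩ := key_identity n n hn
  set N := (W n).length with hN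
  have hN10 : 10 ≤ N := by
    rw [hN, W_length]
    calc 10 = 10 * 1 := by norm_num
    _ ≤ 10 * 2 ^ n := Nat.mul_le_mul_left _ Nat.one_le_two_pow
  have hqd_lt : qd n < Q n := by
    rw [Q_eq_qd n, ← hN]
    have h1 : qd n ≤ qd N := qd_mono (by omega : n ≤ N)
    obtain ⟨k, hk⟩ : ∃ k, N = (k + 1) + 1 := ⟨N - 2, by omega⟩
    have h2 : qd N < qd (N + 1) := by
      rw [hk]
      exact qd_lt_succ (by omega)
    omega
  set Qr := (Q n : ℝ) with hQrdef
  have hQr : 0 < Qr := Q_real_pos n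
  set T := tailSum (n + 3) with hTdef
  have hT : OM - (P n : ℝ) / Qr = T := OM_sub n
  have hTpos : 0 < T := tail_pos _
  have hTle : T * Qr ^ 2 ≤ 1 := by
    have h1 : T ≤ 4 * g (n + 3) := tail_le (n + 3)
    have h2 : 4 * g (n + 3) = 1 / Qr ^ 2 := one_div_Q_sq n
    have h3 : T ≤ 1 / Qr ^ 2 := h1.trans_eq h2
    have h4 : (0:ℝ) < Qr ^ 2 := by positivity
    calc T * Qr ^ 2 ≤ (1 / Qr ^ 2) * Qr ^ 2 := by nlinarith
    _ = 1 := by field_simp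
  set s : ℝ := (-1) ^ (n + 1) with hsdef
  have hss : s = 1 ∨ s = -1 := by
    rcases Nat.even_or_odd (n + 1) with h | h
    · left; rw [hsdef]; exact h.neg_one_pow
    · right; rw [hsdef]; exact h.neg_one_pow
  have hBer : (qd n : ℝ) * (P n : ℝ) - (pd n : ℝ) * Qr = s * B := by
    rw [hQrdef, hsdef]
    exact_mod_cast congrArg (Int.cast : ℤ → ℝ) hBe
  have hsplit : ee n * Qr = s * (qd n : ℝ) * (T * Qr) + B := by
    have hss2 : s * s = 1 := by rcases hss with h | h <;> rw [h] <;> norm_num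
    have hQne : Qr ≠ 0 := ne_of_gt hQr
    have hPQ : (P n : ℝ) = (OM - T) * Qr := by
      rw [← hT]; field_simp; ring
    rw [ee, ← hsdef]
    have hthis := hBer
    rw [hPQ] at hthis
    linear_combination s * hthis + (B:ℝ) * hss2
  have hq_le : (qd n : ℝ) ≤ Qr - 1 := by
    rw [hQrdef]
    have : (qd n : ℝ) + 1 ≤ (Q n : ℝ) := by exact_mod_cast hqd_lt
    linarith
  have hqd0 : (0:ℝ) ≤ (qd n : ℝ) := by exact_mod_cast qd_nonneg n
  have hBr : (1:ℝ) ≤ (B : ℝ) := by exact_mod_cast hB1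
  have hTQ : 0 < T * Qr := mul_pos hTpos hQr
  have hmain : 0 < ee n * Qr := by
    rcases hss with h | h <;> rw [h] at hsplit
    · nlinarith
    · -- ee n * Qr = B - qd n * (T * Qr); qd n * T * Qr ≤ (Qr - 1) * T * Qr ≤ T*Qr^2 - T*Qr < 1
      have h1 : (qd n : ℝ) * (T * Qr) ≤ (Qr - 1) * (T * Qr) := by nlinarith
      have h2 : (Qr - 1) * (T * Qr) = T * Qr ^ 2 - T * Qr := by ring
      nlinarith
  by_contra hcon
  push_neg at hcon
  nlinarith

lemma ee_lt (n : ℕ) : ee (n + 1) < ee n := by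
  have h2 := ee_pos (n + 2)
  have h1 := ee_pos (n + 1)
  have hr := ee_rec n
  have ha := a_one_le n
  have : (1:ℝ) ≤ (a n : ℝ) := by exact_mod_cast ha
  nlinarith

lemma OM_mem : 0 < OM ∧ OM < 1 := by
  have h1 := ee_pos 1
  have h2 := ee_lt 0
  rw [ee_one] at h1 h2
  rw [ee_zero] at h2
  exact ⟨h1, h2⟩

lemma fract_OM : Int.fract OM = OM :=
  Int.fract_eq_self.mpr ⟨OM_mem.1.le, OM_mem.2⟩

noncomputable def xx (n : ℕ) : ℝ := ee (n + 1) / ee n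

lemma xx_pos (n : ℕ) : 0 < xx n := div_pos (ee_pos (n+1)) (ee_pos n)

lemma xx_lt_one (n : ℕ) : xx n < 1 :=
  (div_lt_one (ee_pos n)).mpr (ee_lt n)

lemma one_div_xx (n : ℕ) : 1 / xx n = (a n : ℝ) + xx (n + 1) := by
  have h0 := ee_pos n
  have h1 := ee_pos (n + 1)
  have hr := ee_rec n
  rw [xx, xx]
  rw [one_div_div]
  rw [show ee (n + 2) = ee n - a n * ee (n + 1) from hr]
  field_simp
  ring

lemma gauss_orbit : ∀ n, gaussMap^[n] (Int.fract OM) = xx n := by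
  intro n
  induction n with
  | zero =>
    rw [Function.iterate_zero_apply, fract_OM, xx, ee_one, ee_zero, div_one]
  | succ n ih =>
    rw [Function.iterate_succ_apply', ih, gaussMap, one_div_xx,
      Int.fract_intCast_add, Int.fract_eq_self.mpr ⟨(xx_pos (n+1)).le, xx_lt_one (n+1)⟩]

lemma cfa_OM (n : ℕ) : cfa OM n = a n := by
  rw [cfa, gauss_orbit n, one_div_xx, Int.floor_intCast_add]
  have : ⌊xx (n+1)⌋ = 0 := by
    rw [Int.floor_eq_zero_iff]
    exact ⟨(xx_pos (n+1)).le, xx_lt_one (n+1)⟩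
  omega

lemma ee_half (n : ℕ) : ee (n + 2) ≤ ee n / 2 := by
  have hr := ee_rec n
  have h1 := ee_lt (n + 1)
  have h2 := ee_pos (n + 2)
  have ha : (1:ℝ) ≤ (a n : ℝ) := by exact_mod_cast a_one_le n
  have h3 := ee_pos (n + 1)
  nlinarith

lemma ee_le_geom : ∀ k, ee (2 * k) ≤ (1/2 : ℝ) ^ k := by
  intro k
  induction k with
  | zero => simp [ee_zero]
  | succ k ih =>
    have := ee_half (2 * k)
    calc ee (2 * (k + 1)) = ee (2 * k + 2) := by ring_nf
    _ ≤ ee (2 * k) / 2 := ee_half (2 * k)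
    _ ≤ (1/2:ℝ)^k / 2 := by linarith
    _ = (1/2:ℝ)^(k+1) := by rw [pow_succ]; ring

lemma ee_abs (n : ℕ) (r : ℝ) (hr : r = (qd n : ℝ) * OM - (pd n : ℝ)) :
    ee n = |r| := by
  have hpos := ee_pos n
  have h1 : ee n = (-1:ℝ)^(n+1) * r := by rw [ee, hr]
  have h2 : |ee n| = |r| := by
    rw [h1, abs_mul, abs_pow, abs_neg, abs_one, one_pow, one_mul]
  rw [← h2, abs_of_pos hpos]

lemma OM_irrational : Irrational OM := by
  rw [Irrational]
  intro hmem
  obtain ⟨x, hx⟩ := hmem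
  have hdne : x.den ≠ 0 := x.den_nz
  have hd : 0 < (x.den : ℝ) := by exact_mod_cast x.pos
  have hlow : ∀ n : ℕ, 1 / (x.den : ℝ) ≤ ee n := by
    intro n
    have hpos := ee_pos n
    set r : ℚ := (qd n : ℚ) * x - (pd n : ℚ) with hrdef
    have hrr : (r : ℝ) = (qd n : ℝ) * OM - (pd n : ℝ) := by
      rw [hrdef]; push_cast; rw [hx]
    have habs : ee n = |(r : ℝ)| := ee_abs n (r:ℝ) hrr
    have hxd : x * (x.den : ℚ) = (x.num : ℚ) := Rat.mul_den_eq_num x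
    have hzq : ((qd n * x.num - pd n * (x.den : ℤ) : ℤ) : ℚ) = (x.den : ℚ) * r := by
      push_cast
      rw [hrdef]
      linear_combination (-(qd n : ℚ)) * hxd
    have hr0 : r ≠ 0 := by
      intro h0
      rw [h0] at habs
      simp at habs
      exact absurd habs (ne_of_gt hpos)
    have hz0 : (qd n * x.num - pd n * (x.den : ℤ) : ℤ) ≠ 0 := by
      intro h0
      rw [h0] at hzq
      have : (x.den : ℚ) * r = 0 := by exact_mod_cast hzq.symm
      rcases mul_eq_zero.mp this with h | h
      · exact hdne (by exact_mod_cast h)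
      · exact hr0 h
    have h1le : (1:ℚ) ≤ |(x.den : ℚ) * r| := by
      rw [← hzq]
      have := Int.one_le_abs hz0
      calc (1:ℚ) = ((1:ℤ):ℚ) := by norm_num
      _ ≤ ((|qd n * x.num - pd n * (x.den : ℤ)| : ℤ) : ℚ) := by exact_mod_cast this
      _ = |((qd n * x.num - pd n * (x.den : ℤ) : ℤ) : ℚ)| := by push_cast; ring
    have hdq : (0:ℚ) < (x.den : ℚ) := by exact_mod_cast x.pos
    have h2 : (1:ℚ) ≤ (x.den : ℚ) * |r| := by
      rwa [abs_mul, abs_of_pos hdq] at h1le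
    have h3 : (1:ℝ) ≤ (x.den : ℝ) * |(r:ℝ)| := by
      have : ((x.den : ℚ) * |r| : ℚ) = ((x.den : ℝ) * |(r:ℝ)| : ℝ) := by push_cast; ring
      exact_mod_cast h2
    rw [habs, div_le_iff₀ hd]
    linarith
  have hgeo := ee_le_geom x.den
  have hlow' := hlow (2 * x.den)
  have hpow : ((1:ℝ)/2) ^ x.den < 1 / (x.den : ℝ) := by
    have h1 : (x.den : ℝ) < 2 ^ x.den := by exact_mod_cast Nat.lt_two_pow_self (n := x.den)
    have h2 : (0:ℝ) < 2 ^ x.den := by positivity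
    rw [div_pow, one_pow, div_lt_div_iff₀ h2 hd]
    linarith
  linarith

theorem main : Irrational OM ∧ ∀ n : ℕ, cfa OM n = 1 ∨ cfa OM n = 2 := by
  refine ⟨OM_irrational, fun n => ?_⟩
  rw [cfa_OM n]
  exact a_mem n


end S19

/-- Shallit's example: `Ω = 2·∑_{k≥1} 2^{-2^k}` is irrational and of
constant type: all partial quotients of its continued fraction are `1` or `2`. -/
theorem stmt_19 :
    let Ω : ℝ := 2 * ∑' k : ℕ, (2 : ℝ) ^ (-(2 ^ (k + 1) : ℤ))
    Irrational Ω ∧ ∀ n : ℕ, cfa Ω n = 1 ∨ cfa Ω n = 2 := by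
  intro Ω
  exact S19.main
end
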